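/- For every K > 2 there exists a K-XOR-BN on n = K + 1 nodes that is observable with a single observation node. -/
import Mathlib


/-- `F` is observable with observation set `S` if the map from an initial state to its
output sequence (the restriction of each iterate to `S`) is injective. -/
def observable {n : ℕ} (F : (Fin n → Bool) → (Fin n → Bool)) (S : Finset (Fin n)) : Prop :=
  Function.Injective (fun (x : Fin n → Bool) => fun (t : ℕ) (i : S) => (F^[t] x) i.val)

/-- `F` is a `K`-XOR-BN: each local function is the XOR of `K` literals
on pairwise distinct variables. -/
def isXorBN {n : ℕ} (K : ℕ) (F : (Fin n → Bool) → (Fin n → Bool)) : Prop :=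
  ∀ i : Fin n, ∃ idx : Fin K → Fin n, Function.Injective idx ∧ ∃ b : Bool,
    ∀ x, F x i = (List.ofFn (fun j => x (idx j))).foldr Bool.xor b

namespace KXorAux

def toZ : Bool → ZMod 2 := fun b => if b then 1 else 0

lemma toZ_injective : Function.Injective toZ := by decide

lemma toZ_xor (a b : Bool) : toZ (Bool.xor a b) = toZ a + toZ b := by cases a <;> cases b <;> decide

lemma xor_left_cancel {a b c : Bool} (h : Bool.xor a b = Bool.xor a c) : b = c := by
  cases a <;> simp_all

lemma xor_right_cancel {a b c : Bool} (h : Bool.xor a c = Bool.xor b c) : a = b := by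
  cases c <;> simp_all

lemma toZ_foldr (l : List Bool) (b : Bool) :
    toZ (l.foldr Bool.xor b) = (l.map toZ).sum + toZ b := by
  induction l with
  | nil => simp
  | cons a l ih => simp only [List.foldr_cons, List.map_cons, List.sum_cons, toZ_xor, ih]; ring

lemma toZ_foldr_ofFn {m : ℕ} (f : Fin m → Bool) (b : Bool) :
    toZ ((List.ofFn f).foldr Bool.xor b) = (∑ i, toZ (f i)) + toZ b := by
  rw [toZ_foldr, List.map_ofFn, List.sum_ofFn]
  rfl

/-- total XOR of a state -/
def T {n : ℕ} (x : Fin n → Bool) : Bool := (List.ofFn x).foldr Bool.xor false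

lemma toZ_T {n : ℕ} (x : Fin n → Bool) : toZ (T x) = ∑ i, toZ (x i) := by
  rw [T, toZ_foldr_ofFn]
  simp [toZ]

/-- the Boolean network: node i becomes the XOR of all nodes except `σ i`. -/
def FB {n : ℕ} (σ : Fin n → Fin n) (x : Fin n → Bool) (i : Fin n) : Bool :=
  Bool.xor (T x) (x (σ i))

lemma isXorBN_FB {K : ℕ} (σ : Fin (K + 1) → Fin (K + 1)) : isXorBN K (FB σ) := by
  intro i
  refine ⟨(σ i).succAbove, Fin.succAbove_right_injective, false, fun x => ?_⟩
  apply toZ_injective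
  rw [toZ_foldr_ofFn]
  show toZ (Bool.xor (T x) (x (σ i))) = _
  rw [toZ_xor, toZ_T]
  have h := Fin.sum_univ_succAbove (fun j => toZ (x j)) (σ i)
  have h2 : ∀ a : ZMod 2, a + a = 0 := by decide
  have h0 : toZ false = 0 := rfl
  rw [h0]
  linear_combination h + h2 (toZ (x (σ i)))

lemma toZ_T_FB {n : ℕ} {σ : Fin n → Fin n} (hσ : Function.Bijective σ) (x : Fin n → Bool) :
    toZ (T (FB σ x)) = (n : ZMod 2) * toZ (T x) + toZ (T x) := by
  rw [toZ_T]
  simp only [FB, toZ_xor]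
  rw [Finset.sum_add_distrib, Finset.sum_const, Finset.card_univ, Fintype.card_fin,
    nsmul_eq_mul, hσ.sum_comp (fun j => toZ (x j)), ← toZ_T]

lemma mod_succ_lt {c : ℕ} (hc : 0 < c) (a : ℕ) (ha : a < c) :
    (a + 1) % c = if a + 1 = c then 0 else a + 1 := by
  split
  · next h => rw [h, Nat.mod_self]
  · exact Nat.mod_eq_of_lt (by omega)

/-- cycle of length `c` on the first `c` nodes, fixing the rest -/
def cyc (n c : ℕ) (hc : 0 < c) (hcn : c ≤ n) : Fin n → Fin n := fun i =>
  if (i : ℕ) < c then ⟨((i : ℕ) + 1) % c, lt_of_lt_of_le (Nat.mod_lt _ hc) hcn⟩ else i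

lemma cyc_injective {n c : ℕ} (hc : 0 < c) (hcn : c ≤ n) :
    Function.Injective (cyc n c hc hcn) := by
  intro i j hij
  have hv := congrArg Fin.val hij
  have hm1 : ((i : ℕ) + 1) % c < c := Nat.mod_lt _ hc
  have hm2 : ((j : ℕ) + 1) % c < c := Nat.mod_lt _ hc
  apply Fin.ext
  by_cases hi : (i : ℕ) < c <;> by_cases hj : (j : ℕ) < c <;>
      simp only [cyc, hi, hj, if_true, if_false] at hv
  · rw [mod_succ_lt hc _ hi, mod_succ_lt hc _ hj] at hv
    split_ifs at hv <;> omega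
  · omega
  · omega
  · exact hv

lemma cyc_bijective {n c : ℕ} (hc : 0 < c) (hcn : c ≤ n) :
    Function.Bijective (cyc n c hc hcn) :=
  Finite.injective_iff_bijective.mp (cyc_injective hc hcn)

lemma cyc_iter_zero {n c : ℕ} (hc : 0 < c) (hcn : c ≤ n) (z : Fin n) (hz : (z : ℕ) = 0)
    (t : ℕ) :
    (cyc n c hc hcn)^[t] z = ⟨t % c, lt_of_lt_of_le (Nat.mod_lt _ hc) hcn⟩ := by
  induction t with
  | zero => exact Fin.ext (by simp [hz])
  | succ t ih =>
    rw [Function.iterate_succ_apply', ih]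
    have h1 : t % c < c := Nat.mod_lt _ hc
    apply Fin.ext
    simp only [cyc, h1, if_true]
    exact Nat.mod_add_mod t c 1 ▸ rfl

lemma even_iter {n : ℕ} (σ : Fin n → Fin n) (hTI : ∀ y, T (FB σ y) = T y)
    (t : ℕ) (x : Fin n → Bool) :
    ∀ i : Fin n,
      (FB σ)^[t] x i = Bool.xor (decide (t % 2 = 1) && T x) (x (σ^[t] i)) := by
  have hTiter : ∀ t, T ((FB σ)^[t] x) = T x := by
    intro t
    induction t with
    | zero => rfl
    | succ t ih => rw [Function.iterate_succ_apply', hTI, ih]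
  induction t with
  | zero => intro i; simp
  | succ t ih =>
    intro i
    rw [Function.iterate_succ_apply']
    show Bool.xor (T ((FB σ)^[t] x)) (((FB σ)^[t] x) (σ i)) = _
    rw [hTiter, ih (σ i), ← Function.iterate_succ_apply]
    have hd : decide ((t + 1) % 2 = 1) = !decide (t % 2 = 1) := by
      by_cases h : t % 2 = 1
      · have h2 : (t + 1) % 2 = 0 := by omega
        simp [h, h2]
      · have h2 : (t + 1) % 2 = 1 := by omega
        simp [h, h2]
    rw [hd]
    cases hdt : decide (t % 2 = 1) <;> cases hT : T x <;> simp

lemma odd_iter {n : ℕ} (σ : Fin n → Fin n) (hT0 : ∀ y, T (FB σ y) = false)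
    (t : ℕ) (x : Fin n → Bool) :
    ∀ i : Fin n, (FB σ)^[t + 1] x i = Bool.xor (T x) (x (σ^[t + 1] i)) := by
  induction t with
  | zero => intro i; rfl
  | succ t ih =>
    intro i
    rw [Function.iterate_succ_apply']
    show Bool.xor (T ((FB σ)^[t + 1] x)) (((FB σ)^[t + 1] x) (σ i)) = _
    have hty : T ((FB σ)^[t + 1] x) = false := by
      rw [Function.iterate_succ_apply']
      exact hT0 _
    rw [hty, ih (σ i), ← Function.iterate_succ_apply]
    simp

end KXorAux

open KXorAux in
theorem K_xor_single_observation (K : ℕ) (hK : 2 < K) :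
    ∃ F : (Fin (K + 1) → Bool) → (Fin (K + 1) → Bool),
      isXorBN K F ∧ ∃ i : Fin (K + 1), observable F {i} := by
  have h2 : ∀ a : ZMod 2, a + a = 0 := by decide
  rcases Nat.even_or_odd K with hKe | hKo
  · -- K even, n = K+1 odd : full cycle of odd length K+1
    have hc : 0 < K + 1 := by omega
    set σ : Fin (K + 1) → Fin (K + 1) := cyc (K + 1) (K + 1) hc le_rfl with hσdef
    have hbij : Function.Bijective σ := cyc_bijective hc le_rfl
    have hncast : ((K + 1 : ℕ) : ZMod 2) = 1 := by
      have : ((K : ℕ) : ZMod 2) = 0 :=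
        (ZMod.natCast_eq_zero_iff K 2).2 hKe.two_dvd
      push_cast
      rw [this, zero_add]
    have hT0 : ∀ y, T (FB σ y) = false := by
      intro y
      apply toZ_injective
      rw [toZ_T_FB hbij, hncast, one_mul, h2]
      rfl
    refine ⟨FB σ, isXorBN_FB σ, 0, ?_⟩
    intro x x' h
    have ho : ∀ t : ℕ, (FB σ)^[t] x 0 = (FB σ)^[t] x' 0 := by
      intro t
      exact congrFun (congrFun h t) ⟨0, Finset.mem_singleton_self 0⟩
    have hz : ((0 : Fin (K + 1)) : ℕ) = 0 := rfl
    have hb : ∀ s : ℕ, s % (K + 1) < K + 1 := fun s => Nat.mod_lt _ hc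
    have hform : ∀ s : ℕ,
        Bool.xor (T x) (x ⟨(s + 1) % (K + 1), lt_of_lt_of_le (Nat.mod_lt _ hc) le_rfl⟩)
          = Bool.xor (T x') (x' ⟨(s + 1) % (K + 1), lt_of_lt_of_le (Nat.mod_lt _ hc) le_rfl⟩) := by
      intro s
      have := ho (s + 1)
      rwa [odd_iter σ hT0 s x 0, odd_iter σ hT0 s x' 0,
        cyc_iter_zero hc le_rfl 0 hz (s + 1)] at this
    have h0 : x 0 = x' 0 := ho 0
    have hT : T x = T x' := by
      have := hform K
      have hmk : (⟨(K + 1) % (K + 1), lt_of_lt_of_le (Nat.mod_lt _ hc) le_rfl⟩ : Fin (K + 1))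
          = 0 := Fin.ext (by simp [Nat.mod_self])
      rw [hmk, h0] at this
      exact xor_right_cancel this
    funext i
    by_cases hi : (i : ℕ) = 0
    · have : i = 0 := Fin.ext hi
      rw [this]; exact h0
    · obtain ⟨s, hs⟩ : ∃ s, (i : ℕ) = s + 1 := ⟨(i : ℕ) - 1, by omega⟩
      have hlt : s + 1 < K + 1 := by have := i.is_lt; omega
      have := hform s
      have hmk : (⟨(s + 1) % (K + 1), lt_of_lt_of_le (Nat.mod_lt _ hc) le_rfl⟩ : Fin (K + 1))
          = i := Fin.ext (by simp [Nat.mod_eq_of_lt hlt, hs])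
      rw [hmk, hT] at this
      exact xor_left_cancel this
  · -- K odd, n = K+1 even : cycle of odd length K on the first K nodes, fix the last
    have hc : 0 < K := by omega
    have hcn : K ≤ K + 1 := by omega
    set σ : Fin (K + 1) → Fin (K + 1) := cyc (K + 1) K hc hcn with hσdef
    have hbij : Function.Bijective σ := cyc_bijective hc hcn
    have hncast : ((K + 1 : ℕ) : ZMod 2) = 0 :=
      (ZMod.natCast_eq_zero_iff (K + 1) 2).2 (by
        obtain ⟨m, hm⟩ := hKo
        exact ⟨m + 1, by omega⟩)
    have hTI : ∀ y, T (FB σ y) = T y := by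
      intro y
      apply toZ_injective
      rw [toZ_T_FB hbij, hncast, zero_mul, zero_add]
    refine ⟨FB σ, isXorBN_FB σ, 0, ?_⟩
    intro x x' h
    have ho : ∀ t : ℕ, (FB σ)^[t] x 0 = (FB σ)^[t] x' 0 := by
      intro t
      exact congrFun (congrFun h t) ⟨0, Finset.mem_singleton_self 0⟩
    have hz : ((0 : Fin (K + 1)) : ℕ) = 0 := rfl
    have hform : ∀ t : ℕ,
        Bool.xor (decide (t % 2 = 1) && T x)
            (x ⟨t % K, lt_of_lt_of_le (Nat.mod_lt _ hc) hcn⟩)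
          = Bool.xor (decide (t % 2 = 1) && T x')
            (x' ⟨t % K, lt_of_lt_of_le (Nat.mod_lt _ hc) hcn⟩) := by
      intro t
      have := ho t
      rwa [even_iter σ hTI t x 0, even_iter σ hTI t x' 0,
        cyc_iter_zero hc hcn 0 hz t] at this
    have h0 : x 0 = x' 0 := by
      have := hform 0
      have hmk : (⟨0 % K, lt_of_lt_of_le (Nat.mod_lt _ hc) hcn⟩ : Fin (K + 1)) = 0 :=
        Fin.ext (by simp)
      rw [hmk] at this
      simpa using this
    have hT : T x = T x' := by
      have := hform K
      have hK2 : K % 2 = 1 := Nat.odd_iff.mp hKo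
      have hmk : (⟨K % K, lt_of_lt_of_le (Nat.mod_lt _ hc) hcn⟩ : Fin (K + 1)) = 0 :=
        Fin.ext (by simp [Nat.mod_self])
      rw [hmk, hK2, h0] at this
      simp only [decide_true, Bool.true_and] at this
      exact xor_right_cancel this
    have hlt : ∀ i : Fin (K + 1), (i : ℕ) < K → x i = x' i := by
      intro i hi
      have := hform (i : ℕ)
      have hmk : (⟨(i : ℕ) % K, lt_of_lt_of_le (Nat.mod_lt _ hc) hcn⟩ : Fin (K + 1)) = i :=
        Fin.ext (by simp [Nat.mod_eq_of_lt hi])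
      rw [hmk, hT] at this
      exact xor_left_cancel this
    have hlast : x (Fin.last K) = x' (Fin.last K) := by
      have hs : toZ (T x) = toZ (T x') := congrArg toZ hT
      rw [toZ_T, toZ_T, Fin.sum_univ_castSucc, Fin.sum_univ_castSucc] at hs
      have hsum_eq : ∑ i : Fin K, toZ (x i.castSucc) = ∑ i : Fin K, toZ (x' i.castSucc) :=
        Finset.sum_congr rfl fun i _ => by
          rw [hlt i.castSucc (by simpa using i.is_lt)]
      rw [hsum_eq] at hs
      exact toZ_injective (add_left_cancel hs)
    funext i
    by_cases hi : (i : ℕ) < K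
    · exact hlt i hi
    · have : i = Fin.last K := Fin.ext (by have := i.is_lt; simp [Fin.last]; omega)
      rw [this]; exact hlast
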